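/- Let σ₁, σ₂, ... be an increasing sequence of nonnegative random variables with σ₀ = 0, and suppose the increments ξ_k = σ_k - σ_{k-1} are i.i.d. with Laplace transform E[exp(-λξ₁)] ≤ exp(-√(cλ)) for all λ ≥ λ₀, where c, λ₀ > 0. Define N = sup{n : σ_n < T} for T > 0. Then P(N ≥ n) ≤ exp(-c n² / (4T)) whenever n ≥ 2T λ₀^{1/2} c^{-1/2}. -/

import Mathlib

open MeasureTheory ProbabilityTheory

/-- Let `σ_n = ξ₁ + ... + ξ_n` with `(ξ_k)` i.i.d. nonnegative increments whose Laplace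
transform satisfies `E[exp(-λ ξ₁)] ≤ exp(-√(cλ))` for all `λ ≥ λ₀`.  With
`N = sup{n : σ_n < T}`, the event `{N ≥ n}` equals `{σ_n < T}`, and
`P(σ_n < T) ≤ exp(-c n²/(4T))` whenever `n ≥ 2T λ₀^{1/2} c^{-1/2}`. -/
theorem stmt_6 {Ω : Type*} [MeasurableSpace Ω] (P : Measure Ω) [IsProbabilityMeasure P]
    (ξ : ℕ → Ω → ℝ) (hmeas : ∀ k, Measurable (ξ k)) (hnonneg : ∀ k ω, 0 ≤ ξ k ω)
    (hindep : iIndepFun (m := fun _ => Real.measurableSpace) ξ P)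
    (hident : ∀ k, IdentDistrib (ξ k) (ξ 0) P P)
    (c lam₀ T : ℝ) (hc : 0 < c) (hlam₀ : 0 < lam₀) (hT : 0 < T)
    (hlap : ∀ lam ≥ lam₀, ∫ ω, Real.exp (-lam * ξ 0 ω) ∂P ≤ Real.exp (-Real.sqrt (c * lam)))
    (n : ℕ) (hn : 2 * T * Real.sqrt lam₀ / Real.sqrt c ≤ n) :
    P {ω | ∑ k ∈ Finset.range n, ξ k ω < T} ≤
      ENNReal.ofReal (Real.exp (-c * n ^ 2 / (4 * T))) := by
  set lam : ℝ := c * n ^ 2 / (4 * T ^ 2) with hlam_def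
  have hsqc : (0:ℝ) < Real.sqrt c := Real.sqrt_pos.2 hc
  have hnpos : (0:ℝ) < n := by
    refine lt_of_lt_of_le ?_ hn
    positivity
  have hlam_ge : lam₀ ≤ lam := by
    have h1 : 2 * T * Real.sqrt lam₀ ≤ n * Real.sqrt c := by
      rw [div_le_iff₀ hsqc] at hn
      linarith
    have h2 : (2 * T * Real.sqrt lam₀) ^ 2 ≤ (n * Real.sqrt c) ^ 2 := by
      apply pow_le_pow_left₀ (by positivity) h1
    rw [mul_pow, mul_pow, Real.sq_sqrt hlam₀.le, mul_pow, Real.sq_sqrt hc.le] at h2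
    rw [hlam_def, le_div_iff₀ (by positivity)]
    nlinarith
  have hlam_pos : 0 < lam := lt_of_lt_of_le hlam₀ hlam_ge
  -- integrability of exp(-lam * ξ k)
  have hint : ∀ k, Integrable (fun ω => Real.exp (-lam * ξ k ω)) P := by
    intro k
    refine (integrable_const (1:ℝ)).mono' ?_ ?_
    · exact (((hmeas k).const_mul (-lam)).exp).aestronglyMeasurable
    · filter_upwards with ω
      rw [Real.norm_eq_abs, abs_of_pos (Real.exp_pos _)]
      have : -lam * ξ k ω ≤ 0 := mul_nonpos_of_nonpos_of_nonneg (by linarith) (hnonneg k ω)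
      simpa using Real.exp_le_exp.2 this
  -- Chernoff bound
  have hint_sum : Integrable (fun ω => Real.exp (-lam * (∑ k ∈ Finset.range n, ξ k) ω)) P :=
    hindep.integrable_exp_mul_sum hmeas (fun k _ => hint k)
  have hcher := measure_le_le_exp_mul_mgf (X := ∑ k ∈ Finset.range n, ξ k) (μ := P)
    T (t := -lam) (by linarith) hint_sum
  have hmgf_sum : mgf (∑ k ∈ Finset.range n, ξ k) P (-lam)
      = (mgf (ξ 0) P (-lam)) ^ n := by
    rw [hindep.mgf_sum hmeas]
    rw [Finset.prod_congr rfl (fun k _ => ?_), Finset.prod_const, Finset.card_range]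
    exact ((hident k).comp (Real.measurable_exp.comp (measurable_const_mul (-lam)))).integral_eq
  have hsq : Real.sqrt (c * lam) = c * n / (2 * T) := by
    have : c * lam = (c * n / (2 * T)) ^ 2 := by
      rw [hlam_def]; field_simp; ring
    rw [this, Real.sqrt_sq (by positivity)]
  have hmgf0 : mgf (ξ 0) P (-lam) ≤ Real.exp (-(c * n / (2 * T))) := by
    rw [← hsq]
    exact hlap lam hlam_ge
  have hbound : ((P {ω | (∑ k ∈ Finset.range n, ξ k) ω ≤ T}).toReal)
      ≤ Real.exp (-c * n ^ 2 / (4 * T)) := by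
    refine hcher.trans ?_
    rw [hmgf_sum]
    calc Real.exp (-(-lam) * T) * mgf (ξ 0) P (-lam) ^ n
        ≤ Real.exp (-(-lam) * T) * (Real.exp (-(c * n / (2 * T)))) ^ n := by
          gcongr
          exact mgf_nonneg
      _ = Real.exp (lam * T + n * (-(c * n / (2 * T)))) := by
          rw [← Real.exp_nat_mul, ← Real.exp_add, neg_neg]
      _ = Real.exp (-c * n ^ 2 / (4 * T)) := by
          congr 1
          rw [hlam_def]
          field_simp
          ring
  have hsub : P {ω | ∑ k ∈ Finset.range n, ξ k ω < T}
      ≤ P {ω | (∑ k ∈ Finset.range n, ξ k) ω ≤ T} := by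
    apply measure_mono
    intro ω hω
    simp only [Set.mem_setOf_eq, Finset.sum_apply] at *
    exact hω.le
  refine hsub.trans ?_
  rw [← ENNReal.ofReal_toReal (measure_ne_top P _)]
  exact ENNReal.ofReal_le_ofReal hbound
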